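/- Consider T differentiable loss functions Lᵢ : E × F → ℝ on a product of real inner product spaces, with gradients gᵢ = ∇_y Lᵢ(x, y) with respect to the second argument at a common point (x₀, y₀). Let w₁,…,w_T ≥ 0 sum to 1, and let ḡ = ∑ᵢ wᵢ gᵢ. Suppose for every i, ⟪gᵢ - ḡ, gᵢ⟫ > 0. Then there exists α₀ > 0 such that for all α ∈ (0, α₀): ∑ᵢ Lᵢ(x₀, y₀ - α gᵢ) < ∑ᵢ Lᵢ(x₀, y₀ - α ḡ). -/

import Mathlib

open scoped InnerProductSpace BigOperators

theorem stmt_6 {E F : Type*} [NormedAddCommGroup E] [InnerProductSpace ℝ E]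
    [NormedAddCommGroup F] [InnerProductSpace ℝ F] [CompleteSpace F]
    {T : ℕ} (L : Fin T → E × F → ℝ) (x₀ : E) (y₀ : F) (g : Fin T → F)
    (hL : ∀ i, HasGradientAt (fun y => L i (x₀, y)) (g i) y₀)
    (w : Fin T → ℝ) (hw0 : ∀ i, 0 ≤ w i) (hw1 : ∑ i, w i = 1)
    (hconf : ∀ i, ⟪g i - ∑ j, w j • g j, g i⟫_ℝ > 0) :
    ∃ α₀ > 0, ∀ α : ℝ, 0 < α → α < α₀ →
      ∑ i, L i (x₀, y₀ - α • g i) < ∑ i, L i (x₀, y₀ - α • ∑ j, w j • g j) := by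
  classical
  set G : F := ∑ j, w j • g j with hG
  -- T is nonempty
  have hTne : Nonempty (Fin T) := by
    rcases Nat.eq_zero_or_pos T with h | h
    · exfalso; subst h; simpa using hw1
    · exact ⟨⟨0, h⟩⟩
  -- derivative of α ↦ L i (x₀, y₀ - α • v) at 0 is ⟪g i, -v⟫
  have key : ∀ (i : Fin T) (v : F),
      HasDerivAt (fun α : ℝ => L i (x₀, y₀ - α • v)) ⟪g i, -v⟫_ℝ 0 := by
    intro i v
    have hc : HasDerivAt (fun α : ℝ => y₀ - α • v) (-v) 0 := by
      have : HasDerivAt (fun α : ℝ => α • v) v 0 := by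
        simpa using (hasDerivAt_id (0:ℝ)).smul_const v
      simpa using (hasDerivAt_const (0:ℝ) y₀).fun_sub this
    have hf := (hL i).hasFDerivAt
    have hy : y₀ = y₀ - (0:ℝ) • v := by simp
    rw [hy] at hf
    have := hf.comp_hasDerivAt 0 hc
    simpa [Function.comp_def] using this
  set f : ℝ → ℝ := fun α => ∑ i, (L i (x₀, y₀ - α • g i) - L i (x₀, y₀ - α • G)) with hf
  set D : ℝ := ∑ i, (⟪g i, -g i⟫_ℝ - ⟪g i, -G⟫_ℝ) with hD
  have hderiv : HasDerivAt f D 0 := by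
    apply HasDerivAt.fun_sum
    intro i _
    exact (key i (g i)).sub (key i G)
  have hDneg : D < 0 := by
    have hpos : 0 < ∑ i, ⟪g i - G, g i⟫_ℝ :=
      Finset.sum_pos (fun i _ => hconf i) Finset.univ_nonempty
    have hDeq : D = ∑ i, -⟪g i - G, g i⟫_ℝ := by
      refine Finset.sum_congr rfl fun i _ => ?_
      rw [inner_sub_left, inner_neg_right, inner_neg_right, real_inner_comm (g i) G]
      ring
    rw [hDeq, Finset.sum_neg_distrib]
    linarith
  have hslope := hasDerivAt_iff_tendsto_slope.mp hderiv
  have hev : ∀ᶠ α in nhdsWithin 0 (Set.Ioi 0), slope f 0 α < 0 := by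
    have h1 : ∀ᶠ α in nhdsWithin 0 ({0}ᶜ), slope f 0 α < 0 :=
      hslope (Iio_mem_nhds hDneg)
    exact h1.filter_mono (nhdsWithin_mono 0 (fun x hx => ne_of_gt hx))
  rcases (nhdsGT_basis (0:ℝ)).eventually_iff.mp hev with ⟨α₀, hα₀, hball⟩
  refine ⟨α₀, hα₀, fun α hα1 hα2 => ?_⟩
  have hs := hball ⟨hα1, hα2⟩
  have hf0 : f 0 = (0:ℝ) := by simp [hf]
  have hs' : f α / α < 0 := by
    rw [slope_def_field, hf0, sub_zero, sub_zero] at hs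
    exact hs
  have : f α < 0 := by
    have h2 := mul_neg_of_neg_of_pos hs' hα1
    rwa [div_mul_cancel₀ _ (ne_of_gt hα1)] at h2
  simp only [hf, Finset.sum_sub_distrib] at this
  linarith
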